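/- Let G be a directed graph, P = p_1...p_ℓ a simple directed path, and for each i let L_i be the i-th layer of V(G)∖V(P) (vertices reachable from p_i by a satellite path but not from any later p_j by a satellite path). Fix a vertex v with layer(v) = l and a failed vertex x ∉ V(P). If x is not in layer L_l, or x ∈ L_l but x is not an ancestor of v in the dominator tree D_l of G[L_l ∪ {p_l}] rooted at p_l, then the latest vertex of P having a satellite path to v in G−x equals the latest vertex of P having a satellite path to v in G (both equal p_l). -/

import Mathlib

/-- A (directed) walk in digraph `G` from `a` to `b`, given as its list of vertices. -/
def DiWalk {V : Type*} (G : V → V → Prop) (a b : V) (l : List V) : Prop :=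
  List.Chain' G l ∧ l.head? = some a ∧ l.getLast? = some b

/-- The graph `G` with the vertex `x` removed (induced subgraph `G − x`). -/
def Del {V : Type*} (G : V → V → Prop) (x : V) : V → V → Prop :=
  fun a b => G a b ∧ a ≠ x ∧ b ≠ x

/-- `Sat G p a b`: there is a satellite walk (internal vertices avoiding `p`)
from `a` to `b` in `G`. -/
def Sat {V : Type*} (G : V → V → Prop) (p : List V) (a b : V) : Prop :=
  ∃ l, DiWalk G a b l ∧ ∀ w ∈ l.tail.dropLast, w ∉ p

/-- The `i`-th layer: vertices off `p` reachable from `p.get i` by a satellite path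
but not reachable from any later `p.get j` (`j > i`) by a satellite path. -/
def Layer {V : Type*} (G : V → V → Prop) (p : List V) (i : Fin p.length) : Set V :=
  {w | w ∉ p ∧ Sat G p (p.get i) w ∧
    ∀ j : Fin p.length, (i : ℕ) < (j : ℕ) → ¬ Sat G p (p.get j) w}

/-- Dominance inside the induced subgraph `G[S]` with root `r`: every walk from `r`
to `b` all of whose vertices lie in `S` contains `a`. `DomIn G S r a b` says `a` is
an ancestor of `b` in the dominator tree of `G[S]` rooted at `r`. -/
def DomIn {V : Type*} (G : V → V → Prop) (S : Set V) (r a b : V) : Prop :=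
  ∀ l, DiWalk G r b l → (∀ y ∈ l, y ∈ S) → a ∈ l

namespace Stmt15Aux
variable {V : Type*}

lemma chain'_del {G : V → V → Prop} {x : V} {l : List V}
    (h : List.Chain' G l) (hx : ∀ y ∈ l, y ≠ x) : List.Chain' (Del G x) l := by
  induction l with
  | nil => exact List.isChain_nil
  | cons a t ih =>
    cases t with
    | nil => exact List.isChain_singleton _
    | cons b t' =>
      rw [List.Chain', List.isChain_cons_cons] at h ⊢
      exact ⟨⟨h.1, hx a (by simp), hx b (by simp)⟩, ih h.2 fun y hy => hx y (by simp [hy])⟩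

lemma sat_mono {G G' : V → V → Prop} (h : ∀ a b, G' a b → G a b) {p : List V} {a b : V} :
    Sat G' p a b → Sat G p a b :=
  fun ⟨l, ⟨hc, hh, hl⟩, hi⟩ => ⟨l, ⟨hc.imp h, hh, hl⟩, hi⟩

lemma diwalk_cons {G : V → V → Prop} {a b : V} {l : List V} (h : DiWalk G a b l) :
    ∃ t, l = a :: t := by
  obtain ⟨-, hh, -⟩ := h
  cases l with
  | nil => simp at hh
  | cons c t =>
    have : c = a := by simpa using hh
    exact ⟨t, by rw [this]⟩

lemma mem_last_or_dropLast {l : List V} {b y : V} (hl : l.getLast? = some b) (hy : y ∈ l) :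
    y = b ∨ y ∈ l.dropLast := by
  induction l with
  | nil => simp at hy
  | cons a t ih =>
    cases t with
    | nil => simp_all
    | cons c t' =>
      rw [List.getLast?_cons_cons] at hl
      rcases List.mem_cons.1 hy with rfl | hy
      · right; simp
      · rcases ih hl hy with h | h
        · exact Or.inl h
        · right; simp [h]

lemma getLast?_cons_of_mem {a y b : V} {t : List V}
    (hl : (a :: t).getLast? = some b) (hy : y ∈ t) : t.getLast? = some b := by
  cases t with
  | nil => simp at hy
  | cons c t' => rwa [List.getLast?_cons_cons] at hl

lemma getLast?_append_right {l1 l2 : List V} {b : V} (h : l2.getLast? = some b) :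
    (l1 ++ l2).getLast? = some b := by
  cases l2 with
  | nil => simp at h
  | cons c t =>
    rw [show l1 ++ c :: t = (l1 ++ [c]) ++ t by simp]
    cases t with
    | nil => simpa using h
    | cons d t' =>
      have := getLast?_append_right (l1 := l1 ++ [c]) (l2 := d :: t')
        (by rwa [List.getLast?_cons_cons] at h)
      simpa using this
termination_by l2.length

lemma getLast?_append_of_ne_nil {l1 l2 : List V} (h : l2 ≠ []) :
    (l1 ++ l2).getLast? = l2.getLast? := by
  have h1 : l2.getLast? = some (l2.getLast h) := List.getLast?_eq_getLast h
  rw [h1]; exact getLast?_append_right h1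

lemma sat_trans {G : V → V → Prop} {p : List V} {a w v : V} (hw : w ∉ p)
    (h1 : Sat G p a w) (h2 : Sat G p w v) : Sat G p a v := by
  obtain ⟨l1, hd1, hi1⟩ := h1
  obtain ⟨l2, hd2, hi2⟩ := h2
  obtain ⟨t1, rfl⟩ := diwalk_cons hd1
  obtain ⟨t2, rfl⟩ := diwalk_cons hd2
  obtain ⟨hc1, hh1, hl1⟩ := hd1
  obtain ⟨hc2, -, hl2⟩ := hd2
  cases t2 with
  | nil =>
    have hv : w = v := by simpa using hl2
    exact ⟨a :: t1, ⟨hc1, hh1, hv ▸ hl1⟩, hi1⟩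
  | cons c t2' =>
    refine ⟨(a :: t1) ++ (c :: t2'), ⟨?_, by simp, ?_⟩, ?_⟩
    · rw [List.Chain', List.isChain_append]
      refine ⟨hc1, hc2.tail, ?_⟩
      intro y hy z hz
      have hy' : y = w := by
        rw [Option.mem_def, hl1] at hy; exact (Option.some.inj hy).symm
      have hz' : z = c := by
        rw [Option.mem_def] at hz
        exact (Option.some.inj hz.symm)
      subst hy' hz'
      exact (List.isChain_cons.1 hc2).1 _ rfl
    · exact getLast?_append_right (by rwa [List.getLast?_cons_cons] at hl2)
    · intro y hy
      rw [List.cons_append, List.tail_cons,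
        List.dropLast_append_of_ne_nil (l := c :: t2') (by simp)] at hy
      rcases List.mem_append.1 hy with hy1 | hy2
      · rcases mem_last_or_dropLast (getLast?_cons_of_mem hl1 hy1) hy1 with rfl | hy'
        · exact hw
        · exact hi1 y (by simpa using hy')
      · exact hi2 y (by simpa using hy2)

lemma sat_split {G : V → V → Prop} {p : List V} {a v w : V} {l : List V}
    (hd : DiWalk G a v l) (hint : ∀ y ∈ l.tail.dropLast, y ∉ p)
    (hw : w ∈ l.tail.dropLast) : Sat G p a w ∧ Sat G p w v := by
  obtain ⟨t, rfl⟩ := diwalk_cons hd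
  obtain ⟨hc, -, hl⟩ := hd
  rw [List.tail_cons] at hw hint
  have ht : t ≠ [] := by rintro rfl; simp at hw
  have htv : t = t.dropLast ++ [v] := by
    have h1 : t.getLast? = some v := by
      cases t with
      | nil => exact absurd rfl ht
      | cons c t' => rwa [List.getLast?_cons_cons] at hl
    have h2 := List.dropLast_append_getLast ht
    have h3 : t.getLast ht = v := by
      rw [List.getLast?_eq_getLast ht] at h1
      exact Option.some.inj h1
    rw [← h3]; exact h2.symm
  obtain ⟨m1, m2, hm⟩ := List.append_of_mem hw
  have hleq : a :: t = (a :: m1 ++ [w]) ++ (m2 ++ [v]) := by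
    rw [htv, hm]; simp
  rw [hleq, List.Chain', List.isChain_append] at hc
  obtain ⟨hc1, hc2, hconn⟩ := hc
  constructor
  · refine ⟨a :: m1 ++ [w], ⟨hc1, by simp, ?_⟩, ?_⟩
    · rw [show a :: m1 ++ [w] = (a :: m1) ++ [w] by simp, List.getLast?_concat]
    · intro y hy
      rw [List.cons_append, List.tail_cons, List.dropLast_concat] at hy
      exact hint y (by rw [hm]; simp [hy])
  · refine ⟨w :: (m2 ++ [v]), ⟨?_, by simp, ?_⟩, ?_⟩
    · refine List.isChain_cons.2 ⟨?_, hc2⟩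
      intro z hz
      refine hconn w ?_ z hz
      rw [show a :: m1 ++ [w] = (a :: m1) ++ [w] by simp, List.getLast?_concat]
      rfl
    · exact getLast?_append_right (l1 := [w]) (List.getLast?_concat (l := m2))
    · intro y hy
      rw [List.tail_cons, List.dropLast_concat] at hy
      exact hint y (by rw [hm]; simp [hy])

lemma sat_del_of_walk {G : V → V → Prop} {p : List V} {x r v : V} {T : Set V}
    (hT : ∀ w ∈ T, w ∉ p) :
    ∀ n (l : List V), l.length ≤ n → DiWalk G r v l →
      (∀ y ∈ l, y ∈ insert r T) → x ∉ l → Sat (Del G x) p r v := by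
  intro n
  induction n with
  | zero =>
    intro l hn hd _ _
    obtain ⟨t, rfl⟩ := diwalk_cons hd
    simp at hn
  | succ n ih =>
    intro l hn hd hS hxl
    obtain ⟨t, rfl⟩ := diwalk_cons hd
    by_cases hrt : r ∈ t
    · obtain ⟨t1, t2, rfl⟩ := List.append_of_mem hrt
      obtain ⟨hc, -, hl⟩ := hd
      have heq : r :: (t1 ++ r :: t2) = (r :: t1) ++ (r :: t2) := by simp
      rw [heq] at hc hl hS hxl hn
      refine ih (r :: t2) ?_ ⟨(List.isChain_append.1 hc).2.1, rfl, ?_⟩ ?_ ?_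
      · simp at hn ⊢; omega
      · rwa [getLast?_append_of_ne_nil (by simp)] at hl
      · intro y hy; exact hS y (List.mem_append_right _ hy)
      · intro h; exact hxl (List.mem_append_right _ h)
    · refine ⟨r :: t, ⟨chain'_del hd.1 ?_, hd.2.1, hd.2.2⟩, ?_⟩
      · intro y hy h; exact hxl (h ▸ hy)
      · intro y hy
        rw [List.tail_cons] at hy
        have hyt : y ∈ t := (List.dropLast_sublist t).subset hy
        have hyT : y ∈ insert r T := hS y (List.mem_cons_of_mem _ hyt)
        rcases Set.mem_insert_iff.1 hyT with rfl | hyT'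
        · exact absurd hyt hrt
        · exact hT y hyT'

end Stmt15Aux

open Stmt15Aux

/-- for `v` in layer `L_l` and failed `x ∉ V(P)`, if `x ∉ L_l`, or
`x ∈ L_l` but `x` is not an ancestor of `v` in the dominator tree `D_l` of
`G[L_l ∪ {p_l}]` rooted at `p_l`, then the latest vertex of `P` with a satellite path
to `v` in `G − x` equals the latest vertex of `P` with a satellite path to `v` in `G`
(both being `p_l`). -/
theorem stmt_15 {V : Type*} (G : V → V → Prop) (p : List V)
    (hchain : List.Chain' G p) (hnodup : p.Nodup)
    (x v : V) (hx : x ∉ p) (hv : v ∉ p)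
    (lv : Fin p.length) (hlayer : v ∈ Layer G p lv)
    (hcase : x ∉ Layer G p lv ∨
      (x ∈ Layer G p lv ∧
        ¬ DomIn G (insert (p.get lv) (Layer G p lv)) (p.get lv) x v)) :
    (Sat (Del G x) p (p.get lv) v ∧
      ∀ j : Fin p.length, Sat (Del G x) p (p.get j) v → (j : ℕ) ≤ (lv : ℕ)) ∧
    (Sat G p (p.get lv) v ∧
      ∀ j : Fin p.length, Sat G p (p.get j) v → (j : ℕ) ≤ (lv : ℕ)) := by
  obtain ⟨hvp, hsatv, hmax⟩ := hlayer
  have hmax' : ∀ j : Fin p.length, Sat G p (p.get j) v → (j : ℕ) ≤ (lv : ℕ) :=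
    fun j hj => not_lt.1 fun h => hmax j h hj
  have hdel : Sat (Del G x) p (p.get lv) v := by
    rcases hcase with hxL | ⟨hxL, hdom⟩
    · obtain ⟨l, hd, hint⟩ := hsatv
      have hinl : ∀ w ∈ l.tail.dropLast, w ∈ Layer G p lv := by
        intro w hw
        obtain ⟨h1, h2⟩ := sat_split hd hint hw
        exact ⟨hint w hw, h1, fun j hj hsat => hmax j hj (sat_trans (hint w hw) hsat h2)⟩
      refine ⟨l, ⟨chain'_del hd.1 ?_, hd.2.1, hd.2.2⟩, hint⟩
      intro y hy
      obtain ⟨t, rfl⟩ := diwalk_cons hd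
      rcases List.mem_cons.1 hy with rfl | hyt
      · exact fun h => hx (h ▸ List.get_mem p lv)
      · rcases mem_last_or_dropLast (getLast?_cons_of_mem hd.2.2 hyt) hyt with rfl | hy'
        · intro h
          exact hxL (h ▸ (⟨hvp, ⟨p.get lv :: t, hd, hint⟩, hmax⟩ : y ∈ Layer G p lv))
        · intro h
          exact hxL (h ▸ hinl y (by simpa using hy'))
    · rw [DomIn] at hdom
      push_neg at hdom
      obtain ⟨l, hd, hS, hxl⟩ := hdom
      exact sat_del_of_walk (T := Layer G p lv) (fun w hw => hw.1) l.length l le_rfl hd hS hxl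
  exact ⟨⟨hdel, fun j hj => hmax' j (sat_mono (fun a b h => h.1) hj)⟩, hsatv, hmax'⟩
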